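/- Let d₂, τ > 0, c ∈ L^∞, and let ω : [t₀, T₀] × cl(Ω_t) → ℝ be a C^{1,2} function on a space-time region with moving spatial interval Ω_t = (g(t), h(t)). Suppose ω satisfies ∂_t ω ≥ d₂[τ ∂²_x ω + (1−τ) ∫_{g(t)}^{h(t)} J(x−y) ω(t,y) dy] + c̃(t,x) ω with c̃ := −k − d₂(1−τ) + c < 0 everywhere, ω ≥ 0 on the parabolic boundary (at t = 0 and at x = g(t), x = h(t)), and J ≥ 0 with ∫_ℝ J = 1. If ω attains a negative interior minimum at (t₊, x₊), then a contradiction arises: at (t₊, x₊) one has ∂_t ω ≤ 0, ∂²_x ω ≥ 0, ∫ J(x₊ − y) ω(t₊, y) dy ≥ ω(t₊,x₊), and hence 0 ≥ ∂_t ω ≥ d₂ τ ∂²_x ω + (−k + c(t₊,x₊)) ω(t₊,x₊) > 0. Consequently ω ≥ 0 on the whole closed region. -/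

import Mathlib

open Set MeasureTheory
open Filter Topology

/-- One-sided Fermat: if `f` has derivative `d` at `a` and `a` is a local min of `f`
on `Iic a`, then `d ≤ 0`. -/
lemma left_min_deriv_nonpos {f : ℝ → ℝ} {d a : ℝ} (hf : HasDerivAt f d a)
    (hmin : IsLocalMinOn f (Iic a) a) : d ≤ 0 := by
  have hy : (-1 : ℝ) ∈ posTangentConeAt (Iic a) a := by
    have hseg : segment ℝ a (a - 1) ⊆ Iic a :=
      (convex_Iic a).segment_subset (le_refl a) (by simp)
    simpa using sub_mem_posTangentConeAt_of_segment_subset hseg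
  have h0 := hmin.hasFDerivWithinAt_nonneg hf.hasFDerivAt.hasFDerivWithinAt hy
  simp only [ContinuousLinearMap.toSpanSingleton_apply, ContinuousLinearMap.smulRight_apply, ContinuousLinearMap.one_apply,
    smul_eq_mul, neg_mul, one_mul] at h0
  linarith

/-- Second-derivative test: at an interior minimum the second derivative is nonnegative. -/
lemma second_deriv_test {f f' : ℝ → ℝ} {a b x L : ℝ} (hx : x ∈ Ioo a b)
    (hd : ∀ y ∈ Ioo a b, HasDerivAt f (f' y) y)
    (hL : HasDerivAt f' L x)
    (hmin : ∀ y ∈ Ioo a b, f x ≤ f y) : 0 ≤ L := by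
  by_contra hLneg
  push_neg at hLneg
  have hfx' : f' x = 0 := by
    have hloc : IsLocalMin f x := by
      filter_upwards [Ioo_mem_nhds hx.1 hx.2] with y hy using hmin y hy
    exact hloc.hasDerivAt_eq_zero (hd x hx)
  have hslope := hasDerivAt_iff_tendsto_slope.1 hL
  have hev : ∀ᶠ y in 𝓝[>] x, slope f' x y < 0 :=
    (hslope.mono_left (nhdsWithin_mono x (fun y hy => ne_of_gt hy))).eventually_lt_const hLneg
  rcases mem_nhdsGT_iff_exists_Ioo_subset.1 hev with ⟨u, hu, hIoo⟩
  have hxu : x < u := hu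
  set z : ℝ := min ((x + u) / 2) ((x + b) / 2) with hz
  have hxz : x < z := by
    apply lt_min <;> [linarith; linarith [hx.2]]
  have hzu : z < u := lt_of_le_of_lt (min_le_left _ _) (by linarith)
  have hzb : z < b := lt_of_le_of_lt (min_le_right _ _) (by linarith [hx.2])
  have hsub : Icc x z ⊆ Ioo a b := fun y hy => ⟨lt_of_lt_of_le hx.1 hy.1, lt_of_le_of_lt hy.2 hzb⟩
  have hanti : StrictAntiOn f (Icc x z) := by
    apply strictAntiOn_of_deriv_neg (convex_Icc x z)
    · intro y hy
      exact (hd y (hsub hy)).continuousAt.continuousWithinAt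
    · intro y hy
      rw [interior_Icc] at hy
      have hy' : y ∈ Ioo x u := ⟨hy.1, lt_trans hy.2 hzu⟩
      have hsl := hIoo hy'
      simp only [mem_setOf_eq, slope_def_field, hfx'] at hsl
      have : f' y < 0 := by
        have hyx : 0 < y - x := by linarith [hy.1]
        by_contra hge
        push_neg at hge
        have : 0 ≤ (f' y - 0) / (y - x) := div_nonneg (by linarith) hyx.le
        linarith
      rw [(hd y (hsub (Ioo_subset_Icc_self hy))).deriv]
      exact this
  have : f z < f x := hanti (left_mem_Icc.2 hxz.le) (right_mem_Icc.2 hxz.le) hxz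
  have := hmin z (hsub (right_mem_Icc.2 hxz.le))
  linarith


/-- maximum principle for mixed local–nonlocal parabolic operators,
Lemma 2.1(i): if `ω` satisfies
`∂_t ω ≥ d₂[τ∂²_xω + (1−τ)∫_{g(t)}^{h(t)} J(x−y)ω(t,y)dy] + (−k − d₂(1−τ) + c)ω`
in the moving region with `−k + c < 0` (hence `c̃ = −k − d₂(1−τ) + c < 0`), and
`ω ≥ 0` on the parabolic boundary, then `ω ≥ 0` on the whole closed region. -/
theorem stmt_12 (T₀ d₂ τ k : ℝ) (J : ℝ → ℝ) (g h : ℝ → ℝ)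
    (ω ωt ωx ωxx : ℝ → ℝ → ℝ) (c : ℝ → ℝ → ℝ)
    (hT₀ : 0 < T₀) (hd₂ : 0 < d₂) (hτ : 0 < τ) (hτ1 : τ ≤ 1)
    (hJpos : ∀ x, 0 ≤ J x) (hJint : Integrable J) (hJ1 : ∫ x, J x = 1)
    (hg : ContinuousOn g (Icc 0 T₀)) (hh : ContinuousOn h (Icc 0 T₀))
    (hgh : ∀ t ∈ Icc (0:ℝ) T₀, g t < h t)
    (hωcont : ContinuousOn (fun p : ℝ × ℝ => ω p.1 p.2)
      {p : ℝ × ℝ | p.1 ∈ Icc 0 T₀ ∧ p.2 ∈ Icc (g p.1) (h p.1)})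
    (hdt : ∀ t ∈ Ioc (0:ℝ) T₀, ∀ x ∈ Ioo (g t) (h t),
      HasDerivAt (fun s => ω s x) (ωt t x) t)
    (hdx : ∀ t ∈ Ioc (0:ℝ) T₀, ∀ x ∈ Ioo (g t) (h t),
      HasDerivAt (fun y => ω t y) (ωx t x) x)
    (hdxx : ∀ t ∈ Ioc (0:ℝ) T₀, ∀ x ∈ Ioo (g t) (h t),
      HasDerivAt (fun y => ωx t y) (ωxx t x) x)
    (hpde : ∀ t ∈ Ioc (0:ℝ) T₀, ∀ x ∈ Ioo (g t) (h t),
      d₂ * (τ * ωxx t x + (1 - τ) * ∫ y in g t..h t, J (x - y) * ω t y)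
        + (-k - d₂ * (1 - τ) + c t x) * ω t x ≤ ωt t x)
    (hkc : ∀ t ∈ Ioc (0:ℝ) T₀, ∀ x ∈ Ioo (g t) (h t), -k + c t x < 0)
    (hctilde : ∀ t ∈ Ioc (0:ℝ) T₀, ∀ x ∈ Ioo (g t) (h t),
      -k - d₂ * (1 - τ) + c t x < 0)
    (hinit : ∀ x ∈ Icc (g 0) (h 0), 0 ≤ ω 0 x)
    (hbdry : ∀ t ∈ Icc (0:ℝ) T₀, 0 ≤ ω t (g t) ∧ 0 ≤ ω t (h t)) :
    ∀ t ∈ Icc (0:ℝ) T₀, ∀ x ∈ Icc (g t) (h t), 0 ≤ ω t x := by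
  set E : Set (ℝ × ℝ) := {p : ℝ × ℝ | p.1 ∈ Icc 0 T₀ ∧ p.2 ∈ Icc (g p.1) (h p.1)} with hEdef
  -- E is compact: it is the image of a compact set under a continuous map
  have hK : IsCompact (Icc (0:ℝ) T₀ ×ˢ Icc (0:ℝ) 1) := isCompact_Icc.prod isCompact_Icc
  have hφcont : ContinuousOn
      (fun p : ℝ × ℝ => ((p.1, (1 - p.2) * g p.1 + p.2 * h p.1) : ℝ × ℝ))
      (Icc (0:ℝ) T₀ ×ˢ Icc (0:ℝ) 1) := by
    apply ContinuousOn.prodMk continuousOn_fst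
    have hmaps : MapsTo (Prod.fst : ℝ × ℝ → ℝ) (Icc (0:ℝ) T₀ ×ˢ Icc (0:ℝ) 1) (Icc 0 T₀) :=
      fun p hp => hp.1
    have hgc : ContinuousOn (fun p : ℝ × ℝ => g p.1) (Icc (0:ℝ) T₀ ×ˢ Icc (0:ℝ) 1) :=
      hg.comp continuousOn_fst hmaps
    have hhc : ContinuousOn (fun p : ℝ × ℝ => h p.1) (Icc (0:ℝ) T₀ ×ˢ Icc (0:ℝ) 1) :=
      hh.comp continuousOn_fst hmaps
    exact (((continuousOn_const.sub continuousOn_snd).mul hgc).add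
      (continuousOn_snd.mul hhc))
  have himg : (fun p : ℝ × ℝ => ((p.1, (1 - p.2) * g p.1 + p.2 * h p.1) : ℝ × ℝ)) ''
      (Icc (0:ℝ) T₀ ×ˢ Icc (0:ℝ) 1) = E := by
    ext ⟨t, x⟩
    constructor
    · rintro ⟨⟨t', s⟩, ⟨ht', hs⟩, heq⟩
      have ht : t' = t := congrArg Prod.fst heq
      subst ht
      have hx : (1 - s) * g t' + s * h t' = x := congrArg Prod.snd heq
      have hghle : g t' ≤ h t' := (hgh t' ht').le
      have h1 : 0 ≤ s * (h t' - g t') := mul_nonneg hs.1 (by linarith)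
      have h2 : 0 ≤ (1 - s) * (h t' - g t') :=
        mul_nonneg (by linarith [hs.2]) (by linarith)
      refine ⟨ht', ?_, ?_⟩
      · show g t' ≤ x
        nlinarith [h1]
      · show x ≤ h t'
        nlinarith [h2]
    · rintro ⟨ht, hx⟩
      have hlt : g t < h t := hgh t ht
      refine ⟨(t, (x - g t) / (h t - g t)), ⟨ht, ?_, ?_⟩, ?_⟩
      · exact div_nonneg (by linarith [hx.1]) (by linarith)
      · rw [div_le_one (by linarith)]; linarith [hx.2]
      · have hne : h t - g t ≠ 0 := by linarith
        simp only [Prod.mk.injEq, true_and]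
        show (1 - (x - g t) / (h t - g t)) * g t + (x - g t) / (h t - g t) * h t = x
        field_simp
        ring
  have hEcomp : IsCompact E := himg ▸ hK.image_of_continuousOn hφcont
  have hEne : E.Nonempty :=
    ⟨(0, g 0), ⟨⟨le_refl 0, hT₀.le⟩, le_refl _, (hgh 0 ⟨le_refl 0, hT₀.le⟩).le⟩⟩
  obtain ⟨⟨tP, xP⟩, hmem, hminE⟩ := hEcomp.exists_isMinOn hEne hωcont
  by_contra hcon
  push_neg at hcon
  obtain ⟨t₁, ht₁, x₁, hx₁, hneg⟩ := hcon
  have hmle : ∀ p ∈ E, ω tP xP ≤ ω p.1 p.2 := fun p hp => hminE hp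
  set m := ω tP xP with hm
  have hmneg : m < 0 := lt_of_le_of_lt (hmle (t₁, x₁) ⟨ht₁, hx₁⟩) hneg
  have htPmem : tP ∈ Icc (0:ℝ) T₀ := hmem.1
  have hxPmem : xP ∈ Icc (g tP) (h tP) := hmem.2
  have htPpos : 0 < tP := by
    rcases eq_or_lt_of_le htPmem.1 with heq | hlt
    · exfalso
      have h0 := hinit xP (by rw [heq]; exact hxPmem)
      rw [heq] at h0; linarith
    · exact hlt
  have hxPg : g tP < xP := by
    rcases eq_or_lt_of_le hxPmem.1 with heq | hlt
    · exfalso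
      have h0 := (hbdry tP htPmem).1
      rw [heq] at h0; linarith
    · exact hlt
  have hxPh : xP < h tP := by
    rcases eq_or_lt_of_le hxPmem.2 with heq | hlt
    · exfalso
      have h0 := (hbdry tP htPmem).2
      rw [← heq] at h0; linarith
    · exact hlt
  have htP' : tP ∈ Ioc (0:ℝ) T₀ := ⟨htPpos, htPmem.2⟩
  have hxP' : xP ∈ Ioo (g tP) (h tP) := ⟨hxPg, hxPh⟩
  -- second derivative nonneg
  have hxx0 : 0 ≤ ωxx tP xP :=
    second_deriv_test hxP' (fun y hy => hdx tP htP' y hy) (hdxx tP htP' xP hxP')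
      (fun y hy => hmle (tP, y) ⟨htPmem, Ioo_subset_Icc_self hy⟩)
  -- time derivative nonpos
  have hwt0 : ωt tP xP ≤ 0 := by
    apply left_min_deriv_nonpos (hdt tP htP' xP hxP')
    have hgev : ∀ᶠ s in 𝓝 tP, s ∈ Icc (0:ℝ) T₀ → g s < xP :=
      eventually_nhdsWithin_iff.1 ((hg tP htPmem).eventually_lt_const hxPg)
    have hhev : ∀ᶠ s in 𝓝 tP, s ∈ Icc (0:ℝ) T₀ → xP < h s :=
      eventually_nhdsWithin_iff.1 ((hh tP htPmem).eventually_const_lt hxPh)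
    have : ∀ᶠ s in 𝓝[Iic tP] tP, ω tP xP ≤ ω s xP := by
      rw [eventually_nhdsWithin_iff]
      filter_upwards [hgev, hhev, Ioi_mem_nhds htPpos] with s h1 h2 h3 hs
      have hsIcc : s ∈ Icc (0:ℝ) T₀ := ⟨le_of_lt h3, le_trans hs htPmem.2⟩
      exact hmle (s, xP) ⟨hsIcc, (h1 hsIcc).le, (h2 hsIcc).le⟩
    exact this
  -- nonlocal term estimate
  have hge : g tP ≤ h tP := (hgh tP htPmem).le
  have hJx : Integrable (fun y => J (xP - y)) := hJint.comp_sub_left xP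
  have hJxI : (∫ y, J (xP - y)) = 1 := by
    rw [integral_sub_left_eq_self J volume xP]; exact hJ1
  have hslice : ContinuousOn (fun y => ω tP y) (Icc (g tP) (h tP)) := by
    have hc2 : ContinuousOn (fun y : ℝ => ((tP, y) : ℝ × ℝ)) (Icc (g tP) (h tP)) :=
      (Continuous.prodMk_right tP).continuousOn
    exact hωcont.comp hc2 (fun y hy => ⟨htPmem, hy⟩)
  obtain ⟨C, hC⟩ := isCompact_Icc.exists_bound_of_continuousOn hslice
  have hmeasω : AEStronglyMeasurable (fun y => ω tP y)
      (volume.restrict (Icc (g tP) (h tP))) :=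
    hslice.aestronglyMeasurable measurableSet_Icc
  have hIntProd : IntegrableOn (fun y => J (xP - y) * ω tP y) (Icc (g tP) (h tP)) := by
    apply Integrable.mono' ((hJx.const_mul C).integrableOn)
      (hJx.aestronglyMeasurable.restrict.mul hmeasω)
    rw [ae_restrict_iff' measurableSet_Icc]
    filter_upwards with y hy
    have hb : ‖J (xP - y) * ω tP y‖ ≤ C * J (xP - y) := by
      rw [norm_mul, Real.norm_of_nonneg (hJpos _)]
      calc J (xP - y) * ‖ω tP y‖ ≤ J (xP - y) * C :=
            mul_le_mul_of_nonneg_left (hC y hy) (hJpos _)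
        _ = C * J (xP - y) := mul_comm _ _
    exact hb
  have hIntervalProd : IntervalIntegrable (fun y => J (xP - y) * ω tP y) volume
      (g tP) (h tP) := (intervalIntegrable_iff_integrableOn_Icc_of_le hge).2 hIntProd
  have hIntervalJm : IntervalIntegrable (fun y => J (xP - y) * m) volume (g tP) (h tP) :=
    (hJx.mul_const m).intervalIntegrable
  have hIle : (∫ y in g tP..h tP, J (xP - y) * m) ≤ ∫ y in g tP..h tP, J (xP - y) * ω tP y := by
    apply intervalIntegral.integral_mono_on hge hIntervalJm hIntervalProd
    intro y hy
    exact mul_le_mul_of_nonneg_left (hmle (tP, y) ⟨htPmem, hy⟩) (hJpos _)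
  have hJle1 : (∫ y in g tP..h tP, J (xP - y)) ≤ 1 := by
    rw [intervalIntegral.integral_of_le hge]
    calc (∫ y in Ioc (g tP) (h tP), J (xP - y)) ≤ ∫ y, J (xP - y) :=
          setIntegral_le_integral hJx (Eventually.of_forall fun y => hJpos _)
      _ = 1 := hJxI
  have hmI : m ≤ ∫ y in g tP..h tP, J (xP - y) * ω tP y := by
    have h1 : (∫ y in g tP..h tP, J (xP - y) * m)
        = (∫ y in g tP..h tP, J (xP - y)) * m := intervalIntegral.integral_mul_const m _
    nlinarith [hIle, hJle1, hmneg]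
  -- conclude
  have hp := hpde tP htP' xP hxP'
  have hkc' := hkc tP htP' xP hxP'
  have hτ1' : (0:ℝ) ≤ 1 - τ := by linarith
  have hprod1 : 0 ≤ d₂ * τ * ωxx tP xP := mul_nonneg (mul_nonneg hd₂.le hτ.le) hxx0
  have hprod2 : 0 ≤ d₂ * (1 - τ) * ((∫ y in g tP..h tP, J (xP - y) * ω tP y) - m) :=
    mul_nonneg (mul_nonneg hd₂.le hτ1') (by linarith)
  have hprod3 : 0 < (-k + c tP xP) * m := mul_pos_of_neg_of_neg hkc' hmneg
  nlinarith [hp, hwt0, hprod1, hprod2, hprod3]
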